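/- Let (u,v,w) and (u',v',w') be triples of nonzero isotropic, pairwise orthogonal vectors in Im(O') with Ω(u,v,w) = √2 = Ω(u',v',w'). Then there exists a unique ℝ-linear automorphism ψ of O' satisfying ψ(xy)=ψ(x)ψ(y) for all x,y ∈ O' (an ℝ-algebra automorphism) such that ψ(u)=u', ψ(v)=v' and ψ(w)=w'. -/

import Mathlib

noncomputable section

open Quaternion

/-- The split octonions `𝕆' = ℍ × ℍ`. -/
abbrev SplitOct : Type := ℍ[ℝ] × ℍ[ℝ]

namespace SplitOct

/-- Split octonion multiplication `(a,b)(c,d) = (ac + d̄b, da + bc̄)`. -/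
def mul (x y : SplitOct) : SplitOct :=
  (x.1 * y.1 + star y.2 * x.2, y.2 * x.1 + x.2 * star y.1)

/-- Split octonion conjugation `(a,b)* = (ā, −b)`. -/
def conj (x : SplitOct) : SplitOct := (star x.1, -x.2)

lemma conj_add (x y : SplitOct) : conj (x + y) = conj x + conj y := by
  simp only [conj, Prod.fst_add, Prod.snd_add, star_add, Prod.mk_add_mk, neg_add]

lemma conj_neg (x : SplitOct) : conj (-x) = -conj x := by
  simp [conj, Prod.ext_iff]

lemma conj_sub (x y : SplitOct) : conj (x - y) = conj x - conj y := by
  rw [sub_eq_add_neg, conj_add, conj_neg, ← sub_eq_add_neg]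

lemma conj_smul (r : ℝ) (x : SplitOct) : conj (r • x) = r • conj x := by
  simp [conj, Prod.ext_iff]

lemma conj_conj (x : SplitOct) : conj (conj x) = x := by
  simp [conj]

lemma conj_zero : conj 0 = 0 := by
  simp [conj, Prod.ext_iff]

/-- The imaginary split octonions `Im 𝕆' = {x | x* = −x}`. -/
def Im : Submodule ℝ SplitOct where
  carrier := {x | conj x = -x}
  add_mem' := by
    intro a b ha hb
    simp only [Set.mem_setOf_eq] at ha hb ⊢
    rw [conj_add, ha, hb, neg_add]
  zero_mem' := by
    simp only [Set.mem_setOf_eq, conj_zero, neg_zero]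
  smul_mem' := by
    intro r a ha
    simp only [Set.mem_setOf_eq] at ha ⊢
    rw [conj_smul, ha, smul_neg]

lemma mem_Im_iff {x : SplitOct} : x ∈ Im ↔ conj x = -x := Iff.rfl

/-- `q x = x·x*`, read as a real number (its values lie in `ℝ·1 ≅ ℝ`). -/
def q (x : SplitOct) : ℝ := (mul x (conj x)).1.re

/-- The polarization `⟨x,y⟩` of the quadratic form `q`. -/
def polar (x y : SplitOct) : ℝ := (q (x + y) - q x - q y) / 2

/-- The cross product `x × y = (xy − (xy)*)/2`. -/
def cross (x y : SplitOct) : SplitOct := (2 : ℝ)⁻¹ • (mul x y - conj (mul x y))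

/-- The scalar triple product `Ω(u,v,w) = ⟨u×v, w⟩`. -/
def triple (u v w : SplitOct) : ℝ := polar (cross u v) w

lemma q_apply (x : SplitOct) : q x = normSq x.1 - normSq x.2 := by
  simp only [q, mul, conj, star_neg, neg_mul, Quaternion.self_mul_star, Quaternion.star_mul_self,
    Quaternion.re_add, Quaternion.re_neg, Quaternion.re_coe]
  ring

lemma polar_apply (x y : SplitOct) :
    polar x y = (x.1 * star y.1).re - (x.2 * star y.2).re := by
  simp only [polar, q_apply, Prod.fst_add, Prod.snd_add, Quaternion.normSq_def',
    Quaternion.re_mul, Quaternion.re_add, Quaternion.imI_add, Quaternion.imJ_add,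
    Quaternion.imK_add, Quaternion.re_star, Quaternion.imI_star, Quaternion.imJ_star,
    Quaternion.imK_star]
  ring

lemma polar_add_left (x x' y : SplitOct) : polar (x + x') y = polar x y + polar x' y := by
  simp only [polar_apply, Prod.fst_add, Prod.snd_add, add_mul, Quaternion.re_add]
  ring

lemma polar_add_right (x y y' : SplitOct) : polar x (y + y') = polar x y + polar x y' := by
  simp only [polar_apply, Prod.fst_add, Prod.snd_add, star_add, mul_add, Quaternion.re_add]
  ring

lemma polar_smul_left (r : ℝ) (x y : SplitOct) : polar (r • x) y = r * polar x y := by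
  simp only [polar_apply, Prod.smul_fst, Prod.smul_snd, smul_mul_assoc, Quaternion.re_smul,
    smul_eq_mul]
  ring

lemma polar_smul_right (r : ℝ) (x y : SplitOct) : polar x (r • y) = r * polar x y := by
  simp only [polar_apply, Prod.smul_fst, Prod.smul_snd, Quaternion.star_smul,
    mul_smul_comm, Quaternion.re_smul, smul_eq_mul]
  ring

lemma polar_zero_left (y : SplitOct) : polar 0 y = 0 := by
  simp [polar_apply]

lemma polar_zero_right (x : SplitOct) : polar x 0 = 0 := by
  simp [polar_apply]

lemma mul_add_left (x x' y : SplitOct) : mul (x + x') y = mul x y + mul x' y := by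
  simp only [mul, Prod.fst_add, Prod.snd_add, add_mul, mul_add, Prod.mk_add_mk, Prod.mk.injEq]
  constructor <;> abel

lemma mul_add_right (x y y' : SplitOct) : mul x (y + y') = mul x y + mul x y' := by
  simp only [mul, Prod.fst_add, Prod.snd_add, star_add, add_mul, mul_add, Prod.mk_add_mk,
    Prod.mk.injEq]
  constructor <;> abel

lemma mul_smul_left (r : ℝ) (x y : SplitOct) : mul (r • x) y = r • mul x y := by
  simp only [mul, Prod.smul_fst, Prod.smul_snd, smul_mul_assoc, mul_smul_comm, Prod.smul_mk,
    smul_add]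

lemma mul_smul_right (r : ℝ) (x y : SplitOct) : mul x (r • y) = r • mul x y := by
  simp only [mul, Prod.smul_fst, Prod.smul_snd, Quaternion.star_smul, smul_mul_assoc,
    mul_smul_comm, Prod.smul_mk, smul_add]

lemma mul_zero_left (y : SplitOct) : mul 0 y = 0 := by
  simp [mul, Prod.ext_iff]

lemma mul_zero_right (x : SplitOct) : mul x 0 = 0 := by
  simp [mul, Prod.ext_iff]

lemma cross_add_left (x x' y : SplitOct) : cross (x + x') y = cross x y + cross x' y := by
  rw [cross, cross, cross, mul_add_left, conj_add]
  module

lemma cross_add_right (x y y' : SplitOct) : cross x (y + y') = cross x y + cross x y' := by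
  rw [cross, cross, cross, mul_add_right, conj_add]
  module

lemma cross_smul_left (r : ℝ) (x y : SplitOct) : cross (r • x) y = r • cross x y := by
  rw [cross, cross, mul_smul_left, conj_smul]
  module

lemma cross_smul_right (r : ℝ) (x y : SplitOct) : cross x (r • y) = r • cross x y := by
  rw [cross, cross, mul_smul_right, conj_smul]
  module

lemma cross_zero_left (y : SplitOct) : cross 0 y = 0 := by
  simp [cross, mul_zero_left, conj_zero]

lemma cross_zero_right (x : SplitOct) : cross x 0 = 0 := by
  simp [cross, mul_zero_right, conj_zero]

lemma cross_mem_Im (x y : SplitOct) : cross x y ∈ Im := by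
  rw [mem_Im_iff, cross, conj_smul, conj_sub, conj_conj]
  module

lemma triple_add₁ (u u' v w : SplitOct) :
    triple (u + u') v w = triple u v w + triple u' v w := by
  rw [triple, triple, triple, cross_add_left, polar_add_left]

lemma triple_add₂ (u v v' w : SplitOct) :
    triple u (v + v') w = triple u v w + triple u v' w := by
  rw [triple, triple, triple, cross_add_right, polar_add_left]

lemma triple_add₃ (u v w w' : SplitOct) :
    triple u v (w + w') = triple u v w + triple u v w' :=
  polar_add_right _ _ _

lemma triple_smul₁ (r : ℝ) (u v w : SplitOct) : triple (r • u) v w = r * triple u v w := by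
  rw [triple, triple, cross_smul_left, polar_smul_left]

lemma triple_smul₂ (r : ℝ) (u v w : SplitOct) : triple u (r • v) w = r * triple u v w := by
  rw [triple, triple, cross_smul_right, polar_smul_left]

lemma triple_smul₃ (r : ℝ) (u v w : SplitOct) : triple u v (r • w) = r * triple u v w :=
  polar_smul_right _ _ _

lemma triple_zero₁ (v w : SplitOct) : triple 0 v w = 0 := by
  rw [triple, cross_zero_left, polar_zero_left]

lemma triple_zero₂ (u w : SplitOct) : triple u 0 w = 0 := by
  rw [triple, cross_zero_right, polar_zero_left]

lemma triple_zero₃ (u v : SplitOct) : triple u v 0 = 0 :=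
  polar_zero_right _

/-- The orthogonal complement of `P` inside the imaginary split octonions. -/
def orth (P : Submodule ℝ SplitOct) : Submodule ℝ SplitOct where
  carrier := {x | x ∈ Im ∧ ∀ y ∈ P, polar x y = 0}
  add_mem' := by
    rintro a b ⟨ha1, ha2⟩ ⟨hb1, hb2⟩
    exact ⟨Im.add_mem ha1 hb1, fun y hy => by
      rw [polar_add_left, ha2 y hy, hb2 y hy, add_zero]⟩
  zero_mem' := ⟨Im.zero_mem, fun y _ => polar_zero_left y⟩
  smul_mem' := by
    rintro r a ⟨ha1, ha2⟩
    exact ⟨Im.smul_mem r ha1, fun y hy => by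
      rw [polar_smul_left, ha2 y hy, mul_zero]⟩

/-- The annihilator `Ann x = {v ∈ Im 𝕆' | x × v = 0}`. -/
def Ann (x : SplitOct) : Submodule ℝ SplitOct where
  carrier := {v | v ∈ Im ∧ cross x v = 0}
  add_mem' := by
    rintro a b ⟨ha1, ha2⟩ ⟨hb1, hb2⟩
    exact ⟨Im.add_mem ha1 hb1, by rw [cross_add_right, ha2, hb2, add_zero]⟩
  zero_mem' := ⟨Im.zero_mem, cross_zero_right x⟩
  smul_mem' := by
    rintro r a ⟨ha1, ha2⟩
    exact ⟨Im.smul_mem r ha1, by rw [cross_smul_right, ha2, smul_zero]⟩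

/-- An isotropic line of `Im 𝕆'`. -/
def IsIsotropicLine (ℓ : Submodule ℝ SplitOct) : Prop :=
  ∃ x, x ∈ Im ∧ x ≠ 0 ∧ q x = 0 ∧ ℓ = Submodule.span ℝ {x}

/-- An annihilator photon: a 2-dimensional totally isotropic subspace of `Im 𝕆'`
on which the cross product vanishes identically. -/
def IsAnnihilatorPhoton (ω : Submodule ℝ SplitOct) : Prop :=
  ω ≤ Im ∧ Module.finrank ℝ ω = 2 ∧ (∀ x ∈ ω, q x = 0) ∧
    ∀ x ∈ ω, ∀ y ∈ ω, cross x y = 0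


def oo : SplitOct := (1, 0)

section Universal

/-- tactic-style brute force macro replacement: we just repeat the simp set -/
lemma mul_oo (x : SplitOct) : mul x oo = x := by simp [mul, oo]

lemma oo_mul (x : SplitOct) : mul oo x = x := by simp [mul, oo]

lemma conj_oo : conj oo = oo := by simp [conj, oo]

lemma q_oo : q oo = 1 := by simp [q_apply, oo]

lemma mul_neg_right (x y : SplitOct) : mul x (-y) = -mul x y := by
  have := mul_smul_right (-1 : ℝ) x y
  simpa using this

lemma mul_neg_left (x y : SplitOct) : mul (-x) y = -mul x y := by
  have := mul_smul_left (-1 : ℝ) x y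
  simpa using this

lemma polar_comm (x y : SplitOct) : polar x y = polar y x := by
  simp only [polar_apply]
  obtain ⟨a, b⟩ := x; obtain ⟨c, d⟩ := y
  simp only [Quaternion.re_mul, Quaternion.re_star, Quaternion.imI_star, Quaternion.imJ_star,
    Quaternion.imK_star]
  ring

lemma polar_self (x : SplitOct) : polar x x = q x := by
  simp only [polar, q_apply, Prod.fst_add, Prod.snd_add]
  obtain ⟨a, b⟩ := x
  simp only [Quaternion.normSq_def', Quaternion.re_add, Quaternion.imI_add, Quaternion.imJ_add,
    Quaternion.imK_add]
  ring

lemma mul_conj_self (x : SplitOct) : mul x (conj x) = q x • oo := by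
  obtain ⟨a, b⟩ := x
  simp only [mul, conj, q_apply, oo, Prod.smul_mk]
  refine Prod.ext ?_ ?_ <;>
  · apply Quaternion.ext <;>
    simp [Quaternion.re_mul, Quaternion.imI_mul, Quaternion.imJ_mul, Quaternion.imK_mul,
      Quaternion.normSq_def', Quaternion.re_smul, Quaternion.imI_smul, Quaternion.imJ_smul,
      Quaternion.imK_smul] <;>
    ring

lemma rightalt (x y : SplitOct) : mul (mul x y) y = mul x (mul y y) := by
  obtain ⟨a, b⟩ := x
  obtain ⟨c, d⟩ := y
  simp only [mul]
  refine Prod.ext ?_ ?_ <;>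
  · apply Quaternion.ext <;>
    simp only [Quaternion.re_mul, Quaternion.imI_mul, Quaternion.imJ_mul, Quaternion.imK_mul,
      Quaternion.re_add, Quaternion.imI_add, Quaternion.imJ_add, Quaternion.imK_add,
      Quaternion.re_star, Quaternion.imI_star, Quaternion.imJ_star, Quaternion.imK_star] <;>
    ring

lemma leftalt (x y : SplitOct) : mul x (mul x y) = mul (mul x x) y := by
  obtain ⟨a, b⟩ := x
  obtain ⟨c, d⟩ := y
  simp only [mul]
  refine Prod.ext ?_ ?_ <;>
  · apply Quaternion.ext <;>
    simp only [Quaternion.re_mul, Quaternion.imI_mul, Quaternion.imJ_mul, Quaternion.imK_mul,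
      Quaternion.re_add, Quaternion.imI_add, Quaternion.imJ_add, Quaternion.imK_add,
      Quaternion.re_star, Quaternion.imI_star, Quaternion.imJ_star, Quaternion.imK_star] <;>
    ring

lemma conj_mul (x y : SplitOct) : conj (mul x y) = mul (conj y) (conj x) := by
  obtain ⟨a, b⟩ := x
  obtain ⟨c, d⟩ := y
  simp only [mul, conj]
  refine Prod.ext ?_ ?_ <;>
  · apply Quaternion.ext <;>
    simp only [Quaternion.re_mul, Quaternion.imI_mul, Quaternion.imJ_mul, Quaternion.imK_mul,
      Quaternion.re_add, Quaternion.imI_add, Quaternion.imJ_add, Quaternion.imK_add,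
      Quaternion.re_neg, Quaternion.imI_neg, Quaternion.imJ_neg, Quaternion.imK_neg,
      Quaternion.re_star, Quaternion.imI_star, Quaternion.imJ_star, Quaternion.imK_star] <;>
    ring

lemma polar_mul_conj (x y : SplitOct) :
    mul x (conj y) + mul y (conj x) = (2 * polar x y) • oo := by
  obtain ⟨a, b⟩ := x
  obtain ⟨c, d⟩ := y
  simp only [mul, conj, polar_apply, oo, Prod.smul_mk, Prod.mk_add_mk]
  refine Prod.ext ?_ ?_ <;>
  · apply Quaternion.ext <;>
    simp only [Quaternion.re_mul, Quaternion.imI_mul, Quaternion.imJ_mul, Quaternion.imK_mul,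
      Quaternion.re_add, Quaternion.imI_add, Quaternion.imJ_add, Quaternion.imK_add,
      Quaternion.re_neg, Quaternion.imI_neg, Quaternion.imJ_neg, Quaternion.imK_neg,
      Quaternion.re_smul, Quaternion.imI_smul, Quaternion.imJ_smul, Quaternion.imK_smul,
      Quaternion.re_star, Quaternion.imI_star, Quaternion.imJ_star, Quaternion.imK_star,
      Quaternion.re_one, Quaternion.imI_one, Quaternion.imJ_one, Quaternion.imK_one,
      Quaternion.re_zero, Quaternion.imI_zero, Quaternion.imJ_zero, Quaternion.imK_zero,
      smul_eq_mul, smul_zero] <;>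
    ring

lemma q_mul (x y : SplitOct) : q (mul x y) = q x * q y := by
  obtain ⟨a, b⟩ := x
  obtain ⟨c, d⟩ := y
  simp only [mul, q_apply, Quaternion.normSq_def', Quaternion.re_add, Quaternion.imI_add,
    Quaternion.imJ_add, Quaternion.imK_add, Quaternion.re_mul, Quaternion.imI_mul,
    Quaternion.imJ_mul, Quaternion.imK_mul, Quaternion.re_star, Quaternion.imI_star,
    Quaternion.imJ_star, Quaternion.imK_star]
  ring

lemma polar_mul_left' (x y z : SplitOct) :
    polar (mul x y) z = polar y (mul (conj x) z) := by
  obtain ⟨a, b⟩ := x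
  obtain ⟨c, d⟩ := y
  obtain ⟨e, f⟩ := z
  simp only [mul, conj, polar_apply, Quaternion.re_add, Quaternion.re_mul, Quaternion.imI_mul,
    Quaternion.imJ_mul, Quaternion.imK_mul, Quaternion.re_neg, Quaternion.imI_neg,
    Quaternion.imJ_neg, Quaternion.imK_neg, Quaternion.re_star, Quaternion.imI_star,
    Quaternion.imJ_star, Quaternion.imK_star, Quaternion.imI_add, Quaternion.imJ_add,
    Quaternion.imK_add]
  ring

lemma polar_mul_right' (x y z : SplitOct) :
    polar (mul x y) z = polar x (mul z (conj y)) := by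
  obtain ⟨a, b⟩ := x
  obtain ⟨c, d⟩ := y
  obtain ⟨e, f⟩ := z
  simp only [mul, conj, polar_apply, Quaternion.re_add, Quaternion.re_mul, Quaternion.imI_mul,
    Quaternion.imJ_mul, Quaternion.imK_mul, Quaternion.re_neg, Quaternion.imI_neg,
    Quaternion.imJ_neg, Quaternion.imK_neg, Quaternion.re_star, Quaternion.imI_star,
    Quaternion.imJ_star, Quaternion.imK_star, Quaternion.imI_add, Quaternion.imJ_add,
    Quaternion.imK_add]
  ring

lemma lin_leftalt (x y z : SplitOct) :
    mul x (mul y z) + mul y (mul x z) = mul (mul x y + mul y x) z := by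
  obtain ⟨a, b⟩ := x
  obtain ⟨c, d⟩ := y
  obtain ⟨e, f⟩ := z
  simp only [mul, Prod.mk_add_mk]
  refine Prod.ext ?_ ?_ <;>
  · apply Quaternion.ext <;>
    simp only [Quaternion.re_mul, Quaternion.imI_mul, Quaternion.imJ_mul, Quaternion.imK_mul,
      Quaternion.re_add, Quaternion.imI_add, Quaternion.imJ_add, Quaternion.imK_add,
      Quaternion.re_star, Quaternion.imI_star, Quaternion.imJ_star, Quaternion.imK_star] <;>
    ring

lemma lin_rightalt (x y z : SplitOct) :
    mul (mul x y) z + mul (mul x z) y = mul x (mul y z + mul z y) := by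
  obtain ⟨a, b⟩ := x
  obtain ⟨c, d⟩ := y
  obtain ⟨e, f⟩ := z
  simp only [mul, Prod.mk_add_mk]
  refine Prod.ext ?_ ?_ <;>
  · apply Quaternion.ext <;>
    simp only [Quaternion.re_mul, Quaternion.imI_mul, Quaternion.imJ_mul, Quaternion.imK_mul,
      Quaternion.re_add, Quaternion.imI_add, Quaternion.imJ_add, Quaternion.imK_add,
      Quaternion.re_star, Quaternion.imI_star, Quaternion.imJ_star, Quaternion.imK_star] <;>
    ring

lemma q_add (x y : SplitOct) : q (x + y) = q x + 2 * polar x y + q y := by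
  simp only [polar]; ring

end Universal

section Derivation

lemma im_conj {x : SplitOct} (hx : x ∈ Im) : conj x = -x := hx

lemma polar_neg_right (x y : SplitOct) : polar x (-y) = -polar x y := by
  have := polar_smul_right (-1 : ℝ) x y; simpa using this

lemma polar_neg_left (x y : SplitOct) : polar (-x) y = -polar x y := by
  have := polar_smul_left (-1 : ℝ) x y; simpa using this

lemma q_smul (r : ℝ) (x : SplitOct) : q (r • x) = r ^ 2 * q x := by
  obtain ⟨a, b⟩ := x
  simp only [q_apply, Prod.smul_mk, Quaternion.normSq_def', Quaternion.re_smul,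
    Quaternion.imI_smul, Quaternion.imJ_smul, Quaternion.imK_smul, smul_eq_mul]
  ring

lemma im_polar_oo {x : SplitOct} (hx : x ∈ Im) : polar x oo = 0 := by
  have h1 : star x.1 = -x.1 := congrArg Prod.fst hx
  have h2 : x.1.re = -x.1.re := by
    have := congrArg QuaternionAlgebra.re h1
    simpa using this
  have h3 : x.1.re = 0 := by linarith
  simp [polar_apply, oo, h3]

lemma sq_im {x : SplitOct} (hx : x ∈ Im) : mul x x = (-(q x)) • oo := by
  have h := mul_conj_self x
  rw [im_conj hx, mul_neg_right, neg_eq_iff_eq_neg] at h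
  rw [h, neg_smul]

lemma anti {x y : SplitOct} (hx : x ∈ Im) (hy : y ∈ Im) :
    mul x y + mul y x = (-(2 * polar x y)) • oo := by
  have h := polar_mul_conj x y
  rw [im_conj hx, im_conj hy, mul_neg_right, mul_neg_right, ← neg_add,
    neg_eq_iff_eq_neg] at h
  rw [h, neg_smul]

lemma anti0 {x y : SplitOct} (hx : x ∈ Im) (hy : y ∈ Im) (hp : polar x y = 0) :
    mul y x = -mul x y := by
  have h := anti hx hy
  rw [hp] at h
  simp only [mul_zero, neg_zero, zero_smul] at h
  exact eq_neg_of_add_eq_zero_right h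

lemma mul_mem_im {x y : SplitOct} (hx : x ∈ Im) (hy : y ∈ Im) (hp : polar x y = 0) :
    mul x y ∈ Im := by
  rw [mem_Im_iff, conj_mul, im_conj hx, im_conj hy, mul_neg_left, mul_neg_right, neg_neg,
    anti0 hx hy hp]

lemma cross_eq_mul {x y : SplitOct} (hm : mul x y ∈ Im) : cross x y = mul x y := by
  rw [cross, im_conj hm]
  module

lemma oo_mem_not : polar oo oo = 1 := by
  rw [polar_self, q_oo]

end Derivation

/-- A null Stiefel triple. -/
structure NT (u v w : SplitOct) : Prop where
  hu : u ∈ Im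
  hv : v ∈ Im
  hw : w ∈ Im
  hqu : q u = 0
  hqv : q v = 0
  hqw : q w = 0
  huv : polar u v = 0
  huw : polar u w = 0
  hvw : polar v w = 0
  hΩ : triple u v w = Real.sqrt 2

namespace NT

variable {u v w : SplitOct} (h : NT u v w)
include h

lemma uu : mul u u = 0 := by rw [sq_im h.hu, h.hqu, neg_zero, zero_smul]
lemma vv : mul v v = 0 := by rw [sq_im h.hv, h.hqv, neg_zero, zero_smul]
lemma ww : mul w w = 0 := by rw [sq_im h.hw, h.hqw, neg_zero, zero_smul]

lemma vu : mul v u = -mul u v := anti0 h.hu h.hv h.huv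
lemma wv : mul w v = -mul v w := anti0 h.hv h.hw h.hvw
lemma uw : mul u w = -mul w u := by
  have := anti0 h.hw h.hu (by rw [polar_comm]; exact h.huw)
  exact this

lemma imP : mul u v ∈ Im := mul_mem_im h.hu h.hv h.huv
lemma imR : mul v w ∈ Im := mul_mem_im h.hv h.hw h.hvw
lemma imT : mul w u ∈ Im := mul_mem_im h.hw h.hu (by rw [polar_comm]; exact h.huw)

lemma qP : q (mul u v) = 0 := by rw [q_mul, h.hqu, zero_mul]
lemma qR : q (mul v w) = 0 := by rw [q_mul, h.hqv, zero_mul]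
lemma qT : q (mul w u) = 0 := by rw [q_mul, h.hqw, zero_mul]

lemma pPu : polar (mul u v) u = 0 := by
  rw [polar_mul_left', im_conj h.hu, mul_neg_left, h.uu, neg_zero, polar_zero_right]
lemma pPv : polar (mul u v) v = 0 := by
  rw [polar_mul_right', im_conj h.hv, mul_neg_right, h.vv, neg_zero, polar_zero_right]
lemma pRv : polar (mul v w) v = 0 := by
  rw [polar_mul_left', im_conj h.hv, mul_neg_left, h.vv, neg_zero, polar_zero_right]
lemma pRw : polar (mul v w) w = 0 := by
  rw [polar_mul_right', im_conj h.hw, mul_neg_right, h.ww, neg_zero, polar_zero_right]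
lemma pTw : polar (mul w u) w = 0 := by
  rw [polar_mul_left', im_conj h.hw, mul_neg_left, h.ww, neg_zero, polar_zero_right]
lemma pTu : polar (mul w u) u = 0 := by
  rw [polar_mul_right', im_conj h.hu, mul_neg_right, h.uu, neg_zero, polar_zero_right]

lemma pPw : polar (mul u v) w = Real.sqrt 2 := by
  have := h.hΩ
  rwa [triple, cross_eq_mul h.imP] at this

lemma pRu : polar (mul v w) u = Real.sqrt 2 := by
  rw [polar_mul_left', im_conj h.hv, mul_neg_left, polar_neg_right, h.vu, polar_neg_right,
    neg_neg, polar_comm]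
  exact h.pPw

lemma pTv : polar (mul w u) v = Real.sqrt 2 := by
  rw [polar_mul_left', im_conj h.hw, mul_neg_left, polar_neg_right, h.wv, polar_neg_right,
    neg_neg, polar_comm]
  exact h.pRu

-- (xy)x = 0 style lemmas
lemma Pu2 : mul (mul u v) u = 0 := by
  have hl := lin_rightalt u v u
  rw [h.uu, mul_zero_left, h.vu, neg_add_cancel, mul_zero_right, add_zero] at hl
  exact hl
lemma Rv2 : mul (mul v w) v = 0 := by
  have hl := lin_rightalt v w v
  rw [h.vv, mul_zero_left, h.wv, neg_add_cancel, mul_zero_right, add_zero] at hl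
  exact hl
lemma Tw2 : mul (mul w u) w = 0 := by
  have hl := lin_rightalt w u w
  rw [h.ww, mul_zero_left, h.uw, neg_add_cancel, mul_zero_right, add_zero] at hl
  exact hl

lemma pPR : polar (mul u v) (mul v w) = 0 := by
  rw [polar_mul_right', im_conj h.hv, mul_neg_right, h.Rv2, neg_zero, polar_zero_right]
lemma pRT : polar (mul v w) (mul w u) = 0 := by
  rw [polar_mul_right', im_conj h.hw, mul_neg_right, h.Tw2, neg_zero, polar_zero_right]
lemma pTP : polar (mul w u) (mul u v) = 0 := by
  rw [polar_mul_right', im_conj h.hu, mul_neg_right, h.Pu2, neg_zero, polar_zero_right]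

-- zero products
lemma uP : mul u (mul u v) = 0 := by rw [leftalt, h.uu, mul_zero_left]
lemma Pv : mul (mul u v) v = 0 := by rw [rightalt, h.vv, mul_zero_right]
lemma vR : mul v (mul v w) = 0 := by rw [leftalt, h.vv, mul_zero_left]
lemma Rw : mul (mul v w) w = 0 := by rw [rightalt, h.ww, mul_zero_right]
lemma wT : mul w (mul w u) = 0 := by rw [leftalt, h.ww, mul_zero_left]
lemma Tu : mul (mul w u) u = 0 := by rw [rightalt, h.uu, mul_zero_right]

lemma vP : mul v (mul u v) = 0 := by
  rw [anti0 h.imP h.hv h.pPv, h.Pv, neg_zero]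
lemma Pu : mul (mul u v) u = 0 := h.Pu2
lemma wR : mul w (mul v w) = 0 := by
  rw [anti0 h.imR h.hw h.pRw, h.Rw, neg_zero]
lemma Rv : mul (mul v w) v = 0 := h.Rv2
lemma uT : mul u (mul w u) = 0 := by
  rw [anti0 h.imT h.hu h.pTu, h.Tu, neg_zero]
lemma Tw : mul (mul w u) w = 0 := h.Tw2

end NT

/-- The "seventh imaginary" element attached to a null triple. -/
def Hel (u v w : SplitOct) : SplitOct := mul u (mul v w) + Real.sqrt 2 • oo

lemma K_eq (u v w : SplitOct) : mul u (mul v w) = Hel u v w - Real.sqrt 2 • oo := by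
  rw [Hel]; module

namespace NT

variable {u v w : SplitOct} (h : NT u v w)
include h

lemma PP : mul (mul u v) (mul u v) = 0 := by rw [sq_im h.imP, h.qP, neg_zero, zero_smul]
lemma RR : mul (mul v w) (mul v w) = 0 := by rw [sq_im h.imR, h.qR, neg_zero, zero_smul]
lemma TT : mul (mul w u) (mul w u) = 0 := by rw [sq_im h.imT, h.qT, neg_zero, zero_smul]

lemma puR : polar u (mul v w) = Real.sqrt 2 := by rw [polar_comm]; exact h.pRu

lemma RuK : mul (mul v w) u = (-(2 * Real.sqrt 2)) • oo - mul u (mul v w) := by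
  have ha := anti h.hu h.imR
  rw [h.puR] at ha
  exact eq_sub_of_add_eq' ha

lemma imH : Hel u v w ∈ Im := by
  rw [mem_Im_iff, Hel, conj_add, conj_smul, conj_oo, conj_mul, im_conj h.imR, im_conj h.hu,
    mul_neg_left, mul_neg_right, neg_neg, h.RuK]
  module

lemma qK : q (mul u (mul v w)) = 0 := by rw [q_mul, h.hqu, zero_mul]

lemma pKoo : polar (mul u (mul v w)) oo = -Real.sqrt 2 := by
  rw [polar_mul_left', im_conj h.hu, mul_neg_left, mul_oo, polar_neg_right, h.pRu]

lemma qH : q (Hel u v w) = -2 := by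
  have h2 : Real.sqrt 2 * Real.sqrt 2 = 2 := Real.mul_self_sqrt (by norm_num)
  rw [Hel, q_add, h.qK, polar_smul_right, h.pKoo, q_smul, q_oo]
  linear_combination (-(1 : ℝ)) * h2

lemma pKu : polar (mul u (mul v w)) u = 0 := by
  rw [polar_mul_left', im_conj h.hu, mul_neg_left, h.uu, neg_zero, polar_zero_right]
lemma pKv : polar (mul u (mul v w)) v = 0 := by
  rw [polar_mul_left', im_conj h.hu, mul_neg_left, polar_neg_right, polar_comm, h.pPR, neg_zero]
lemma pKw : polar (mul u (mul v w)) w = 0 := by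
  rw [polar_mul_left', im_conj h.hu, mul_neg_left, polar_neg_right, h.uw,
    polar_neg_right, neg_neg, h.pRT]
lemma pKP : polar (mul u (mul v w)) (mul u v) = 0 := by
  rw [polar_mul_left', im_conj h.hu, mul_neg_left, polar_neg_right, h.uP, polar_zero_right,
    neg_zero]
lemma pKR : polar (mul u (mul v w)) (mul v w) = 0 := by
  rw [polar_mul_right', mul_conj_self, h.qR, zero_smul, polar_zero_right]
lemma pKT : polar (mul u (mul v w)) (mul w u) = 0 := by
  rw [polar_mul_left', im_conj h.hu, mul_neg_left, polar_neg_right, h.uT, polar_zero_right,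
    neg_zero]

lemma pHu : polar (Hel u v w) u = 0 := by
  rw [Hel, polar_add_left, polar_smul_left, h.pKu, polar_comm, im_polar_oo h.hu]; ring
lemma pHv : polar (Hel u v w) v = 0 := by
  rw [Hel, polar_add_left, polar_smul_left, h.pKv, polar_comm, im_polar_oo h.hv]; ring
lemma pHw : polar (Hel u v w) w = 0 := by
  rw [Hel, polar_add_left, polar_smul_left, h.pKw, polar_comm, im_polar_oo h.hw]; ring
lemma pHP : polar (Hel u v w) (mul u v) = 0 := by
  rw [Hel, polar_add_left, polar_smul_left, h.pKP, polar_comm, im_polar_oo h.imP]; ring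
lemma pHR : polar (Hel u v w) (mul v w) = 0 := by
  rw [Hel, polar_add_left, polar_smul_left, h.pKR, polar_comm, im_polar_oo h.imR]; ring
lemma pHT : polar (Hel u v w) (mul w u) = 0 := by
  rw [Hel, polar_add_left, polar_smul_left, h.pKT, polar_comm, im_polar_oo h.imT]; ring
lemma pHoo : polar (Hel u v w) oo = 0 := im_polar_oo h.imH

lemma vT_eq : mul v (mul w u) = mul u (mul v w) := by
  have hl := lin_leftalt u v w
  rw [h.vu, add_neg_cancel, mul_zero_left, h.uw, mul_neg_right, ← sub_eq_add_neg,
    sub_eq_zero] at hl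
  exact hl.symm

lemma wP_eq : mul w (mul u v) = mul u (mul v w) := by
  have hl := lin_leftalt v w u
  rw [h.wv, add_neg_cancel, mul_zero_left, h.vu, mul_neg_right, ← sub_eq_add_neg,
    sub_eq_zero] at hl
  rw [← hl]
  exact h.vT_eq

lemma Tv_eq : mul (mul w u) v = (-(2 * Real.sqrt 2)) • oo - mul u (mul v w) := by
  have ha := anti h.hv h.imT
  have hp : polar v (mul w u) = Real.sqrt 2 := by rw [polar_comm]; exact h.pTv
  rw [hp, h.vT_eq] at ha
  exact eq_sub_of_add_eq' ha

lemma Pw_eq : mul (mul u v) w = (-(2 * Real.sqrt 2)) • oo - mul u (mul v w) := by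
  have ha := anti h.hw h.imP
  have hp : polar w (mul u v) = Real.sqrt 2 := by rw [polar_comm]; exact h.pPw
  rw [hp, h.wP_eq] at ha
  exact eq_sub_of_add_eq' ha

lemma uK0 : mul u (mul u (mul v w)) = 0 := by rw [leftalt, h.uu, mul_zero_left]
lemma vK0 : mul v (mul u (mul v w)) = 0 := by
  have hl := lin_leftalt v u (mul v w)
  rw [h.vR, mul_zero_right, add_zero, h.vu, neg_add_cancel, mul_zero_left] at hl
  exact hl
lemma wK0 : mul w (mul u (mul v w)) = 0 := by
  have hl := lin_leftalt w u (mul v w)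
  rw [h.wR, mul_zero_right, add_zero, h.uw, add_neg_cancel, mul_zero_left] at hl
  exact hl

lemma uH : mul u (Hel u v w) = Real.sqrt 2 • u := by
  rw [Hel, mul_add_right, mul_smul_right, mul_oo, h.uK0, zero_add]
lemma vH : mul v (Hel u v w) = Real.sqrt 2 • v := by
  rw [Hel, mul_add_right, mul_smul_right, mul_oo, h.vK0, zero_add]
lemma wH : mul w (Hel u v w) = Real.sqrt 2 • w := by
  rw [Hel, mul_add_right, mul_smul_right, mul_oo, h.wK0, zero_add]

lemma Hu : mul (Hel u v w) u = -(Real.sqrt 2 • u) := by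
  rw [anti0 h.hu h.imH (by rw [polar_comm]; exact h.pHu), h.uH]
lemma Hv : mul (Hel u v w) v = -(Real.sqrt 2 • v) := by
  rw [anti0 h.hv h.imH (by rw [polar_comm]; exact h.pHv), h.vH]
lemma Hw : mul (Hel u v w) w = -(Real.sqrt 2 • w) := by
  rw [anti0 h.hw h.imH (by rw [polar_comm]; exact h.pHw), h.wH]

lemma Ku : mul (mul u (mul v w)) u = (-(2 * Real.sqrt 2)) • u := by
  have hE := h.Hu
  rw [Hel, mul_add_left, mul_smul_left, oo_mul] at hE
  have := eq_sub_of_add_eq hE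
  rw [this]
  try module
lemma Kv : mul (mul u (mul v w)) v = (-(2 * Real.sqrt 2)) • v := by
  have hE := h.Hv
  rw [Hel, mul_add_left, mul_smul_left, oo_mul] at hE
  have := eq_sub_of_add_eq hE
  rw [this]
  try module
lemma Kw : mul (mul u (mul v w)) w = (-(2 * Real.sqrt 2)) • w := by
  have hE := h.Hw
  rw [Hel, mul_add_left, mul_smul_left, oo_mul] at hE
  have := eq_sub_of_add_eq hE
  rw [this]
  try module

lemma PR_eq : mul (mul u v) (mul v w) = (2 * Real.sqrt 2) • v := by
  have hl := lin_rightalt u v (mul v w)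
  rw [h.vR, h.Rv, add_zero, mul_zero_right, h.Kv] at hl
  have := eq_neg_of_add_eq_zero_left hl
  rw [this]
  try module
lemma RT_eq : mul (mul v w) (mul w u) = (2 * Real.sqrt 2) • w := by
  have hl := lin_rightalt v w (mul w u)
  rw [h.wT, h.Tw, add_zero, mul_zero_right, h.vT_eq, h.Kw] at hl
  have := eq_neg_of_add_eq_zero_left hl
  rw [this]
  try module
lemma TP_eq : mul (mul w u) (mul u v) = (2 * Real.sqrt 2) • u := by
  have hl := lin_rightalt w u (mul u v)
  rw [h.uP, h.Pu, add_zero, mul_zero_right, h.wP_eq, h.Ku] at hl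
  have := eq_neg_of_add_eq_zero_left hl
  rw [this]
  try module

lemma RP_eq : mul (mul v w) (mul u v) = -((2 * Real.sqrt 2) • v) := by
  rw [anti0 h.imP h.imR h.pPR, h.PR_eq]
lemma TR_eq : mul (mul w u) (mul v w) = -((2 * Real.sqrt 2) • w) := by
  rw [anti0 h.imR h.imT h.pRT, h.RT_eq]
lemma PT_eq : mul (mul u v) (mul w u) = -((2 * Real.sqrt 2) • u) := by
  rw [anti0 h.imT h.imP h.pTP, h.TP_eq]

lemma PK : mul (mul u v) (mul u (mul v w)) = -((2 * Real.sqrt 2) • mul u v) := by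
  have hl := lin_leftalt (mul u v) u (mul v w)
  rw [h.Pu, h.uP, add_zero, mul_zero_left, h.PR_eq, mul_smul_right] at hl
  have := eq_neg_of_add_eq_zero_left hl
  rw [this]
  try module
lemma RK : mul (mul v w) (mul u (mul v w)) = -((2 * Real.sqrt 2) • mul v w) := by
  have hl := lin_leftalt (mul v w) u (mul v w)
  rw [h.RR, mul_zero_right, add_zero, anti h.imR h.hu, h.pRu, mul_smul_left, oo_mul] at hl
  rw [hl]
  try module
lemma TK : mul (mul w u) (mul u (mul v w)) = -((2 * Real.sqrt 2) • mul w u) := by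
  have hl := lin_leftalt (mul w u) u (mul v w)
  have hTR : mul (mul w u) (mul v w) = -((2 * Real.sqrt 2) • w) := h.TR_eq
  rw [h.Tu, h.uT, add_zero, mul_zero_left, hTR, mul_neg_right, mul_smul_right, h.uw] at hl
  have := eq_neg_of_add_eq_zero_left hl
  rw [this]
  try module

lemma PH_eq : mul (mul u v) (Hel u v w) = -(Real.sqrt 2 • mul u v) := by
  rw [Hel, mul_add_right, mul_smul_right, mul_oo, h.PK]; module
lemma RH_eq : mul (mul v w) (Hel u v w) = -(Real.sqrt 2 • mul v w) := by
  rw [Hel, mul_add_right, mul_smul_right, mul_oo, h.RK]; module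
lemma TH_eq : mul (mul w u) (Hel u v w) = -(Real.sqrt 2 • mul w u) := by
  rw [Hel, mul_add_right, mul_smul_right, mul_oo, h.TK]; module

lemma HP_eq : mul (Hel u v w) (mul u v) = Real.sqrt 2 • mul u v := by
  rw [anti0 h.imP h.imH (by rw [polar_comm]; exact h.pHP), h.PH_eq, neg_neg]
lemma HR_eq : mul (Hel u v w) (mul v w) = Real.sqrt 2 • mul v w := by
  rw [anti0 h.imR h.imH (by rw [polar_comm]; exact h.pHR), h.RH_eq, neg_neg]
lemma HT_eq : mul (Hel u v w) (mul w u) = Real.sqrt 2 • mul w u := by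
  rw [anti0 h.imT h.imH (by rw [polar_comm]; exact h.pHT), h.TH_eq, neg_neg]

lemma HH_eq : mul (Hel u v w) (Hel u v w) = (2 : ℝ) • oo := by
  rw [sq_im h.imH, h.qH]; norm_num

end NT

/-- `polar` as a bilinear map. -/
def polarL : SplitOct →ₗ[ℝ] SplitOct →ₗ[ℝ] ℝ :=
  LinearMap.mk₂ ℝ polar polar_add_left polar_smul_left polar_add_right polar_smul_right

/-- `mul` as a bilinear map. -/
def mulL : SplitOct →ₗ[ℝ] SplitOct →ₗ[ℝ] SplitOct :=
  LinearMap.mk₂ ℝ mul mul_add_left mul_smul_left mul_add_right mul_smul_right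

/-- The canonical 8-element family attached to a null triple. -/
def E (u v w : SplitOct) : Fin 8 → SplitOct :=
  ![oo, u, v, w, mul u v, mul v w, mul w u, Hel u v w]

lemma E0 (u v w : SplitOct) : E u v w 0 = oo := rfl
lemma E1 (u v w : SplitOct) : E u v w 1 = u := rfl
lemma E2 (u v w : SplitOct) : E u v w 2 = v := rfl
lemma E3 (u v w : SplitOct) : E u v w 3 = w := rfl
lemma E4 (u v w : SplitOct) : E u v w 4 = mul u v := rfl
lemma E5 (u v w : SplitOct) : E u v w 5 = mul v w := rfl
lemma E6 (u v w : SplitOct) : E u v w 6 = mul w u := rfl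
lemma E7 (u v w : SplitOct) : E u v w 7 = Hel u v w := rfl

lemma E0' (u v w : SplitOct) : E u v w ⟨0, by norm_num⟩ = oo := rfl
lemma E1' (u v w : SplitOct) : E u v w ⟨1, by norm_num⟩ = u := rfl
lemma E2' (u v w : SplitOct) : E u v w ⟨2, by norm_num⟩ = v := rfl
lemma E3' (u v w : SplitOct) : E u v w ⟨3, by norm_num⟩ = w := rfl
lemma E4' (u v w : SplitOct) : E u v w ⟨4, by norm_num⟩ = mul u v := rfl
lemma E5' (u v w : SplitOct) : E u v w ⟨5, by norm_num⟩ = mul v w := rfl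
lemma E6' (u v w : SplitOct) : E u v w ⟨6, by norm_num⟩ = mul w u := rfl
lemma E7' (u v w : SplitOct) : E u v w ⟨7, by norm_num⟩ = Hel u v w := rfl

lemma finrank_splitOct : Module.finrank ℝ SplitOct = 8 := by
  rw [Module.finrank_prod, Quaternion.finrank_eq_four]

lemma polar_oo_oo : polar oo oo = 1 := by rw [polar_self, q_oo]

namespace NT

variable {u v w : SplitOct} (h : NT u v w)
include h

lemma indep : LinearIndependent ℝ (E u v w) := by
  have hs : Real.sqrt 2 ≠ 0 := by positivity
  rw [Fintype.linearIndependent_iff]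
  intro g hg
  have key : ∀ y, (∑ i, g i * polar (E u v w i) y) = 0 := by
    intro y
    have h1 : polarL (∑ i, g i • E u v w i) y = 0 := by rw [hg]; simp [polarL]
    rw [map_sum] at h1
    simpa [polarL] using h1
  have c00 : polar oo oo = 1 := polar_oo_oo
  have c10 : polar u oo = 0 := im_polar_oo h.hu
  have c20 : polar v oo = 0 := im_polar_oo h.hv
  have c30 : polar w oo = 0 := im_polar_oo h.hw
  have c40 : polar (mul u v) oo = 0 := im_polar_oo h.imP
  have c50 : polar (mul v w) oo = 0 := im_polar_oo h.imR
  have c60 : polar (mul w u) oo = 0 := im_polar_oo h.imT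
  have c70 : polar (Hel u v w) oo = 0 := h.pHoo
  have c01 : polar oo u = 0 := by rw [polar_comm]; exact c10
  have c11 : polar u u = 0 := by rw [polar_self, h.hqu]
  have c21 : polar v u = 0 := by rw [polar_comm]; exact h.huv
  have c31 : polar w u = 0 := by rw [polar_comm]; exact h.huw
  have c41 : polar (mul u v) u = 0 := h.pPu
  have c51 : polar (mul v w) u = Real.sqrt 2 := h.pRu
  have c61 : polar (mul w u) u = 0 := h.pTu
  have c71 : polar (Hel u v w) u = 0 := h.pHu
  have c02 : polar oo v = 0 := by rw [polar_comm]; exact c20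
  have c12 : polar u v = 0 := h.huv
  have c22 : polar v v = 0 := by rw [polar_self, h.hqv]
  have c32 : polar w v = 0 := by rw [polar_comm]; exact h.hvw
  have c42 : polar (mul u v) v = 0 := h.pPv
  have c52 : polar (mul v w) v = 0 := h.pRv
  have c62 : polar (mul w u) v = Real.sqrt 2 := h.pTv
  have c72 : polar (Hel u v w) v = 0 := h.pHv
  have c03 : polar oo w = 0 := by rw [polar_comm]; exact c30
  have c13 : polar u w = 0 := h.huw
  have c23 : polar v w = 0 := h.hvw
  have c33 : polar w w = 0 := by rw [polar_self, h.hqw]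
  have c43 : polar (mul u v) w = Real.sqrt 2 := h.pPw
  have c53 : polar (mul v w) w = 0 := h.pRw
  have c63 : polar (mul w u) w = 0 := h.pTw
  have c73 : polar (Hel u v w) w = 0 := h.pHw
  have c04 : polar oo (mul u v) = 0 := by rw [polar_comm]; exact c40
  have c14 : polar u (mul u v) = 0 := by rw [polar_comm]; exact h.pPu
  have c24 : polar v (mul u v) = 0 := by rw [polar_comm]; exact h.pPv
  have c34 : polar w (mul u v) = Real.sqrt 2 := by rw [polar_comm]; exact h.pPw
  have c44 : polar (mul u v) (mul u v) = 0 := by rw [polar_self, h.qP]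
  have c54 : polar (mul v w) (mul u v) = 0 := by rw [polar_comm]; exact h.pPR
  have c64 : polar (mul w u) (mul u v) = 0 := h.pTP
  have c74 : polar (Hel u v w) (mul u v) = 0 := h.pHP
  have c05 : polar oo (mul v w) = 0 := by rw [polar_comm]; exact c50
  have c15 : polar u (mul v w) = Real.sqrt 2 := h.puR
  have c25 : polar v (mul v w) = 0 := by rw [polar_comm]; exact h.pRv
  have c35 : polar w (mul v w) = 0 := by rw [polar_comm]; exact h.pRw
  have c45 : polar (mul u v) (mul v w) = 0 := h.pPR
  have c55 : polar (mul v w) (mul v w) = 0 := by rw [polar_self, h.qR]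
  have c65 : polar (mul w u) (mul v w) = 0 := by rw [polar_comm]; exact h.pRT
  have c75 : polar (Hel u v w) (mul v w) = 0 := h.pHR
  have c06 : polar oo (mul w u) = 0 := by rw [polar_comm]; exact c60
  have c16 : polar u (mul w u) = 0 := by rw [polar_comm]; exact h.pTu
  have c26 : polar v (mul w u) = Real.sqrt 2 := by rw [polar_comm]; exact h.pTv
  have c36 : polar w (mul w u) = 0 := by rw [polar_comm]; exact h.pTw
  have c46 : polar (mul u v) (mul w u) = 0 := by rw [polar_comm]; exact h.pTP
  have c56 : polar (mul v w) (mul w u) = 0 := h.pRT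
  have c66 : polar (mul w u) (mul w u) = 0 := by rw [polar_self, h.qT]
  have c76 : polar (Hel u v w) (mul w u) = 0 := h.pHT
  have c07 : polar oo (Hel u v w) = 0 := by rw [polar_comm]; exact c70
  have c17 : polar u (Hel u v w) = 0 := by rw [polar_comm]; exact h.pHu
  have c27 : polar v (Hel u v w) = 0 := by rw [polar_comm]; exact h.pHv
  have c37 : polar w (Hel u v w) = 0 := by rw [polar_comm]; exact h.pHw
  have c47 : polar (mul u v) (Hel u v w) = 0 := by rw [polar_comm]; exact h.pHP
  have c57 : polar (mul v w) (Hel u v w) = 0 := by rw [polar_comm]; exact h.pHR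
  have c67 : polar (mul w u) (Hel u v w) = 0 := by rw [polar_comm]; exact h.pHT
  have c77 : polar (Hel u v w) (Hel u v w) = -2 := by rw [polar_self, h.qH]
  have k0 := key oo
  have k1 := key (mul v w)
  have k2 := key (mul w u)
  have k3 := key (mul u v)
  have k4 := key w
  have k5 := key u
  have k6 := key v
  have k7 := key (Hel u v w)
  rw [Fin.sum_univ_eight] at k0 k1 k2 k3 k4 k5 k6 k7
  simp only [E0, E1, E2, E3, E4, E5, E6, E7, c00, c10, c20, c30, c40, c50, c60, c70,
    c01, c11, c21, c31, c41, c51, c61, c71, c02, c12, c22, c32, c42, c52, c62, c72,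
    c03, c13, c23, c33, c43, c53, c63, c73, c04, c14, c24, c34, c44, c54, c64, c74,
    c05, c15, c25, c35, c45, c55, c65, c75, c06, c16, c26, c36, c46, c56, c66, c76,
    c07, c17, c27, c37, c47, c57, c67, c77,
    mul_zero, mul_one, add_zero, zero_add] at k0 k1 k2 k3 k4 k5 k6 k7
  have hg1 : g 1 = 0 := by
    rcases mul_eq_zero.mp k1 with h1 | h1
    · exact h1
    · exact absurd h1 hs
  have hg2 : g 2 = 0 := by
    rcases mul_eq_zero.mp k2 with h1 | h1
    · exact h1
    · exact absurd h1 hs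
  have hg3 : g 3 = 0 := by
    rcases mul_eq_zero.mp k3 with h1 | h1
    · exact h1
    · exact absurd h1 hs
  have hg4 : g 4 = 0 := by
    rcases mul_eq_zero.mp k4 with h1 | h1
    · exact h1
    · exact absurd h1 hs
  have hg5 : g 5 = 0 := by
    rcases mul_eq_zero.mp k5 with h1 | h1
    · exact h1
    · exact absurd h1 hs
  have hg6 : g 6 = 0 := by
    rcases mul_eq_zero.mp k6 with h1 | h1
    · exact h1
    · exact absurd h1 hs
  have hg7 : g 7 = 0 := by
    have : g 7 * -2 = 0 := k7
    rcases mul_eq_zero.mp this with h1 | h1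
    · exact h1
    · norm_num at h1
  intro i
  fin_cases i
  · exact k0
  · exact hg1
  · exact hg2
  · exact hg3
  · exact hg4
  · exact hg5
  · exact hg6
  · exact hg7

/-- The basis attached to a null triple. -/
noncomputable def bas : Module.Basis (Fin 8) ℝ SplitOct :=
  basisOfLinearIndependentOfCardEqFinrank h.indep
    (by rw [Fintype.card_fin, finrank_splitOct])

lemma bas_apply (i : Fin 8) : h.bas i = E u v w i := by
  simp [bas, coe_basisOfLinearIndependentOfCardEqFinrank]

end NT

/-- Simple transitivity of the automorphism group of the split octonions on
null Stiefel triples: triples of nonzero isotropic pairwise orthogonal vectors with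
`Ω (u,v,w) = √2`. -/
theorem existsUnique_automorphism_of_null_triples
    (u v w u' v' w' : SplitOct)
    (hu : u ∈ Im) (hv : v ∈ Im) (hw : w ∈ Im)
    (hu0 : u ≠ 0) (hv0 : v ≠ 0) (hw0 : w ≠ 0)
    (hqu : q u = 0) (hqv : q v = 0) (hqw : q w = 0)
    (huv : polar u v = 0) (huw : polar u w = 0) (hvw : polar v w = 0)
    (hΩ : triple u v w = Real.sqrt 2)
    (hu' : u' ∈ Im) (hv' : v' ∈ Im) (hw' : w' ∈ Im)
    (hu0' : u' ≠ 0) (hv0' : v' ≠ 0) (hw0' : w' ≠ 0)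
    (hqu' : q u' = 0) (hqv' : q v' = 0) (hqw' : q w' = 0)
    (huv' : polar u' v' = 0) (huw' : polar u' w' = 0) (hvw' : polar v' w' = 0)
    (hΩ' : triple u' v' w' = Real.sqrt 2) :
    ∃! ψ : SplitOct ≃ₗ[ℝ] SplitOct,
      (∀ x y : SplitOct, ψ (mul x y) = mul (ψ x) (ψ y)) ∧
        ψ u = u' ∧ ψ v = v' ∧ ψ w = w' := by
  have h : NT u v w := ⟨hu, hv, hw, hqu, hqv, hqw, huv, huw, hvw, hΩ⟩
  have h' : NT u' v' w' := ⟨hu', hv', hw', hqu', hqv', hqw', huv', huw', hvw', hΩ'⟩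
  classical
  let ψ : SplitOct ≃ₗ[ℝ] SplitOct := h.bas.equiv h'.bas (Equiv.refl _)
  have hψE : ∀ i, ψ (E u v w i) = E u' v' w' i := by
    intro i
    show h.bas.equiv h'.bas (Equiv.refl _) (E u v w i) = _
    conv_lhs => rw [← h.bas_apply]
    rw [Module.Basis.equiv_apply, Equiv.refl_apply, h'.bas_apply]
  have s0 : ψ oo = oo := hψE 0
  have s1 : ψ u = u' := hψE 1
  have s2 : ψ v = v' := hψE 2
  have s3 : ψ w = w' := hψE 3
  have s4 : ψ (mul u v) = mul u' v' := hψE 4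
  have s5 : ψ (mul v w) = mul v' w' := hψE 5
  have s6 : ψ (mul w u) = mul w' u' := hψE 6
  have s7 : ψ (Hel u v w) = Hel u' v' w' := hψE 7
  have key : ∀ i j, ψ (mul (E u v w i) (E u v w j)) = mul (E u' v' w' i) (E u' v' w' j) := by
    intro i j
    fin_cases i <;> fin_cases j <;>
      simp only [E0, E1, E2, E3, E4, E5, E6, E7, E0', E1', E2', E3', E4', E5', E6', E7', oo_mul, mul_oo, K_eq u v w, K_eq u' v' w',
        h.uu, h.vv, h.ww, h.vu, h.wv, h.uw, h.uP, h.Pu, h.vP, h.Pv, h.uT, h.Tu,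
        h.vR, h.Rv, h.wR, h.Rw, h.wT, h.Tw, h.PP, h.RR, h.TT,
        h.vT_eq, h.wP_eq, h.RuK, h.Tv_eq, h.Pw_eq,
        h.PR_eq, h.RP_eq, h.RT_eq, h.TR_eq, h.TP_eq, h.PT_eq,
        h.uH, h.vH, h.wH, h.Hu, h.Hv, h.Hw, h.PH_eq, h.HP_eq, h.RH_eq, h.HR_eq,
        h.TH_eq, h.HT_eq, h.HH_eq,
        h'.uu, h'.vv, h'.ww, h'.vu, h'.wv, h'.uw, h'.uP, h'.Pu, h'.vP, h'.Pv, h'.uT, h'.Tu,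
        h'.vR, h'.Rv, h'.wR, h'.Rw, h'.wT, h'.Tw, h'.PP, h'.RR, h'.TT,
        h'.vT_eq, h'.wP_eq, h'.RuK, h'.Tv_eq, h'.Pw_eq,
        h'.PR_eq, h'.RP_eq, h'.RT_eq, h'.TR_eq, h'.TP_eq, h'.PT_eq,
        h'.uH, h'.vH, h'.wH, h'.Hu, h'.Hv, h'.Hw, h'.PH_eq, h'.HP_eq, h'.RH_eq, h'.HR_eq,
        h'.TH_eq, h'.HT_eq, h'.HH_eq,
        map_add, map_sub, map_smul, map_neg, map_zero, s0, s1, s2, s3, s4, s5, s6, s7]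
  have hmul : ∀ x y : SplitOct, ψ (mul x y) = mul (ψ x) (ψ y) := by
    have hFG : mulL.compr₂ (ψ : SplitOct →ₗ[ℝ] SplitOct) =
        LinearMap.compl₁₂ mulL (ψ : SplitOct →ₗ[ℝ] SplitOct) (ψ : SplitOct →ₗ[ℝ] SplitOct) := by
      refine h.bas.ext fun i => h.bas.ext fun j => ?_
      simp only [LinearMap.compr₂_apply, LinearMap.compl₁₂_apply, h.bas_apply, mulL,
        LinearMap.mk₂_apply, LinearEquiv.coe_coe]
      rw [hψE i, hψE j]
      exact key i j
    intro x y
    have h2 := LinearMap.congr_fun (LinearMap.congr_fun hFG x) y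
    simpa only [LinearMap.compr₂_apply, LinearMap.compl₁₂_apply, mulL, LinearMap.mk₂_apply,
      LinearEquiv.coe_coe] using h2
  refine ⟨ψ, ⟨hmul, s1, s2, s3⟩, ?_⟩
  rintro φ ⟨hφmul, hφu, hφv, hφw⟩
  have hφoo : φ oo = oo := by
    have hsur : ∀ y, mul y (φ oo) = y := by
      intro y
      obtain ⟨x, rfl⟩ := φ.surjective y
      rw [← hφmul, mul_oo]
    have h2 := hsur oo
    rwa [oo_mul] at h2
  have hφE : ∀ i, φ (E u v w i) = E u' v' w' i := by
    intro i
    fin_cases i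
    · exact hφoo
    · exact hφu
    · exact hφv
    · exact hφw
    · show φ (mul u v) = mul u' v'
      rw [hφmul, hφu, hφv]
    · show φ (mul v w) = mul v' w'
      rw [hφmul, hφv, hφw]
    · show φ (mul w u) = mul w' u'
      rw [hφmul, hφw, hφu]
    · show φ (Hel u v w) = Hel u' v' w'
      rw [Hel, Hel, map_add, map_smul, hφoo, hφmul, hφmul, hφu, hφv, hφw]
  apply LinearEquiv.toLinearMap_injective
  refine h.bas.ext fun i => ?_
  simp only [LinearEquiv.coe_coe, h.bas_apply]
  rw [hφE i, hψE i]

end SplitOct
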